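/- Let n ≥ 3 be an integer and let σ be a permutation of P_n. Then the determinant of the Petrie matrix M_σ of σ (over ℝ) equals 1 or −1; in particular M_σ is invertible. -/

import Mathlib

open Matrix

/-- `σ` is a permutation of `P_n = {1,…,n}`, viewed as a function `ℕ → ℕ`. -/
def IsPermOn (n : ℕ) (σ : ℕ → ℕ) : Prop :=
  Set.BijOn σ (Set.Icc 1 n) (Set.Icc 1 n)

/-- The Petrie matrix of a map `σ` on `P_n`: the `(n-1) × (n-1)` real matrix whose
`(i,j)` entry (with `1`-based indices) is `1` iff
`min (σ i) (σ (i+1)) ≤ j ≤ max (σ i) (σ (i+1)) - 1`, and `0` otherwise. -/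
def petrie (n : ℕ) (σ : ℕ → ℕ) : Matrix (Fin (n - 1)) (Fin (n - 1)) ℝ :=
  Matrix.of fun i j =>
    if min (σ (i.1 + 1)) (σ (i.1 + 2)) ≤ j.1 + 1 ∧
        j.1 + 1 ≤ max (σ (i.1 + 1)) (σ (i.1 + 2)) - 1 then 1 else 0

/-- Two square real matrices are similar if `B = P * A * P⁻¹` for some invertible `P`. -/
def MatSimilar {m : Type*} [Fintype m] [DecidableEq m] (A B : Matrix m m ℝ) : Prop :=
  ∃ P : Matrix m m ℝ, IsUnit P ∧ B = P * A * P⁻¹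

/-- `σ'` (a permutation of `P_{k+n}`) is a right extension of `σ` (a permutation of `P_k`). -/
def IsRightExt (k n : ℕ) (σ σ' : ℕ → ℕ) : Prop :=
  IsPermOn (k + n) σ' ∧
  (∀ i, 1 ≤ i → i ≤ k - 1 → σ' i = σ i) ∧
  ∃ t, k + 1 ≤ t ∧ t ≤ k + n ∧ σ' t = σ k ∧
    ∀ j, j ≠ t → k ≤ j → j ≤ k + n → k < σ' j

/-- `(σ', ρ')` is a synchronized right extension of `(σ, ρ)` to `P_{k+n}`. -/
def IsSyncRightExt (k n : ℕ) (σ ρ σ' ρ' : ℕ → ℕ) : Prop :=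
  IsRightExt k n σ σ' ∧ IsRightExt k n ρ ρ' ∧
  ∃ t, k + 1 ≤ t ∧ t ≤ k + n ∧ σ' t = σ k ∧ ρ' t = ρ k ∧
    ∀ i, i ≠ t → k ≤ i → i ≤ k + n → σ' i = ρ' i

/-- `σ'` (a permutation of `P_{m+k}`) is a left extension of `σ` (a permutation of `P_k`). -/
def IsLeftExt (k m : ℕ) (σ σ' : ℕ → ℕ) : Prop :=
  IsPermOn (m + k) σ' ∧
  (∀ i, 2 ≤ i → i ≤ k → σ' (m + i) = m + σ i) ∧
  ∃ s, 1 ≤ s ∧ s ≤ m ∧ σ' s = m + σ 1 ∧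
    ∀ j, j ≠ s → 1 ≤ j → j ≤ m + 1 → σ' j < m + 1

/-- `(σ', ρ')` is a synchronized left extension of `(σ, ρ)` to `P_{m+k}`. -/
def IsSyncLeftExt (k m : ℕ) (σ ρ σ' ρ' : ℕ → ℕ) : Prop :=
  IsLeftExt k m σ σ' ∧ IsLeftExt k m ρ ρ' ∧
  ∃ s, 1 ≤ s ∧ s ≤ m ∧ σ' s = m + σ 1 ∧ ρ' s = m + ρ 1 ∧
    ∀ i, i ≠ s → 1 ≤ i → i ≤ m + 1 → σ' i = ρ' i

/-- `σ'` (a permutation of `P_{m+k+n}`) is a two-sided extension of `σ` (a permutation of `P_k`). -/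
def IsTwoSidedExt (k m n : ℕ) (σ σ' : ℕ → ℕ) : Prop :=
  IsPermOn (m + k + n) σ' ∧
  (∀ i, 2 ≤ i → i ≤ k - 1 → σ' (m + i) = m + σ i) ∧
  (∃ s, 1 ≤ s ∧ s ≤ m ∧ σ' s = m + σ 1 ∧
    ∀ i, i ≠ s → 1 ≤ i → i ≤ m + 1 → σ' i < m + 1) ∧
  (∃ t, m + k + 1 ≤ t ∧ t ≤ m + k + n ∧ σ' t = m + σ k ∧
    ∀ j, j ≠ t → m + k ≤ j → j ≤ m + k + n → m + k < σ' j)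

/-- `(σ', ρ')` is a synchronized two-sided extension of `(σ, ρ)` to `P_{m+k+n}`. -/
def IsSyncTwoSidedExt (k m n : ℕ) (σ ρ σ' ρ' : ℕ → ℕ) : Prop :=
  IsTwoSidedExt k m n σ σ' ∧ IsTwoSidedExt k m n ρ ρ' ∧
  ∃ s t, 1 ≤ s ∧ s ≤ m ∧ m + k + 1 ≤ t ∧ t ≤ m + k + n ∧
    σ' s = m + σ 1 ∧ ρ' s = m + ρ 1 ∧ σ' t = m + σ k ∧ ρ' t = m + ρ k ∧
    ∀ i, i ≠ s → i ≠ t →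
      ((1 ≤ i ∧ i ≤ m + 1) ∨ (m + k ≤ i ∧ i ≤ m + k + n)) → σ' i = ρ' i

/-- `σ` and `ρ` (permutations of `P_k`) are right similar. -/
def RightSimilar (k : ℕ) (σ ρ : ℕ → ℕ) : Prop :=
  ∀ n, 1 ≤ n → ∀ σ' ρ' : ℕ → ℕ, IsSyncRightExt k n σ ρ σ' ρ' →
    MatSimilar (petrie (k + n) σ') (petrie (k + n) ρ')

/-- `σ` and `ρ` (permutations of `P_k`) are left similar. -/
def LeftSimilar (k : ℕ) (σ ρ : ℕ → ℕ) : Prop :=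
  ∀ m, 1 ≤ m → ∀ σ' ρ' : ℕ → ℕ, IsSyncLeftExt k m σ ρ σ' ρ' →
    MatSimilar (petrie (m + k) σ') (petrie (m + k) ρ')

/-- `σ` and `ρ` (permutations of `P_k`) are two-sided similar. -/
def TwoSidedSimilar (k : ℕ) (σ ρ : ℕ → ℕ) : Prop :=
  ∀ m n, 1 ≤ m → 1 ≤ n → ∀ σ' ρ' : ℕ → ℕ, IsSyncTwoSidedExt k m n σ ρ σ' ρ' →
    MatSimilar (petrie (m + k + n) σ') (petrie (m + k + n) ρ')

/-- `σ` and `ρ` (permutations of `P_k`) are right weakly similar. -/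
def RightWeaklySimilar (k : ℕ) (σ ρ : ℕ → ℕ) : Prop :=
  ∀ n, 1 ≤ n → ∀ σ' ρ' : ℕ → ℕ, IsSyncRightExt k n σ ρ σ' ρ' →
    (petrie (k + n) σ').charpoly = (petrie (k + n) ρ').charpoly

/-- Auxiliary: the "difference" matrix. -/
def PD (m : ℕ) : Matrix (Fin (m+1)) (Fin (m+1)) ℝ :=
  Matrix.of fun i j =>
    if i.1 = 0 then (if j.1 = 0 then 1 else 0)
    else if j.1 = i.1 then 1 else if j.1 + 1 = i.1 then -1 else 0

/-- Auxiliary: the "step" matrix. -/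
def PL (m : ℕ) : Matrix (Fin (m+1)) (Fin (m+1)) ℝ :=
  Matrix.of fun a j => if j.1 = 0 ∨ a.1 + 1 ≤ j.1 then 1 else 0

/-- Auxiliary: the permuted step matrix attached to `σ`. -/
def PF (m : ℕ) (σ : ℕ → ℕ) : Matrix (Fin (m+1)) (Fin (m+1)) ℝ :=
  Matrix.of fun i j => if j.1 = 0 ∨ σ (i.1 + 1) ≤ j.1 then 1 else 0

lemma PD_mul (m : ℕ) (A : Matrix (Fin (m+1)) (Fin (m+1)) ℝ) (i j : Fin (m+1)) :
    (PD m * A) i j = if i.1 = 0 then A ⟨0, Nat.succ_pos m⟩ j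
      else A i j - A ⟨i.1 - 1, by omega⟩ j := by
  rw [Matrix.mul_apply]
  by_cases hi : i.1 = 0
  · have h : ∀ k : Fin (m+1), PD m i k = if k = ⟨0, Nat.succ_pos m⟩ then 1 else 0 := by
      intro k; simp only [PD, Matrix.of_apply, hi, if_true, Fin.ext_iff]
    simp only [h, ite_mul, one_mul, zero_mul, Finset.sum_ite_eq', Finset.mem_univ, if_true, hi]
  · have h : ∀ k : Fin (m+1), PD m i k * A k j
        = (if k = i then A k j else 0)
          - (if k = (⟨i.1 - 1, by omega⟩ : Fin (m+1)) then A k j else 0) := by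
      intro k
      simp only [PD, Matrix.of_apply, hi, if_false, Fin.ext_iff, Fin.val_mk]
      split_ifs <;> first | ring1 | (exfalso; omega)
    rw [Finset.sum_congr rfl fun k _ => h k]
    simp only [Finset.sum_sub_distrib, Finset.sum_ite_eq', Finset.mem_univ, if_true, hi, if_false]

lemma PD_mul_PL (m : ℕ) (i j : Fin (m+1)) :
    (PD m * PL m) i j = if i.1 = 0 then 1 else if j = i then -1 else 0 := by
  rw [PD_mul]
  by_cases hi : i.1 = 0
  · simp only [hi, if_true, PL, Matrix.of_apply]
    rw [if_pos (by omega)]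
  · simp only [hi, if_false, PL, Matrix.of_apply, Fin.ext_iff, Fin.val_mk]
    split_ifs <;> first | ring1 | (exfalso; omega)

lemma petrie_det_sq (m : ℕ) (σ : ℕ → ℕ) (hσ : IsPermOn (m+1) σ) :
    (petrie (m+1) σ).det ^ 2 = 1 := by
  have hval : ∀ i : ℕ, 1 ≤ i → i ≤ m+1 → 1 ≤ σ i ∧ σ i ≤ m+1 := by
    intro i h1 h2
    have := hσ.mapsTo (show i ∈ Set.Icc 1 (m+1) by simp only [Set.mem_Icc]; omega)
    simpa [Set.mem_Icc] using this
  have hinj : ∀ i j : ℕ, 1 ≤ i → i ≤ m+1 → 1 ≤ j → j ≤ m+1 → σ i = σ j → i = j := by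
    intro i j hi1 hi2 hj1 hj2 h
    exact hσ.injOn (by simp only [Set.mem_Icc]; omega) (by simp only [Set.mem_Icc]; omega) h
  -- the permutation of `Fin (m+1)` induced by `σ`
  have hfv : ∀ i : Fin (m+1), σ (i.1+1) - 1 < m + 1 := by
    intro i
    have := hval (i.1+1) (by omega) (by omega)
    omega
  set f : Fin (m+1) → Fin (m+1) := fun i => ⟨σ (i.1+1) - 1, hfv i⟩ with hf
  have hfinj : Function.Injective f := by
    intro a b hab
    have ha := hval (a.1+1) (by omega) (by omega)
    have hb := hval (b.1+1) (by omega) (by omega)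
    have hv : σ (a.1+1) - 1 = σ (b.1+1) - 1 := congrArg Fin.val hab
    have : σ (a.1+1) = σ (b.1+1) := by omega
    have := hinj _ _ (by omega) (by omega) (by omega) (by omega) this
    exact Fin.ext (by omega)
  set e : Equiv.Perm (Fin (m+1)) :=
    Equiv.ofBijective f (Finite.injective_iff_bijective.mp hfinj) with he
  have hPF : PF m σ = (PL m).submatrix e id := by
    ext i j
    have h1 := (hval (i.1+1) (by omega) (by omega)).1
    have h2 : (e i).1 = σ (i.1+1) - 1 := rfl
    simp only [PF, PL, Matrix.of_apply, Matrix.submatrix_apply, id_eq, h2]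
    by_cases hc : j.1 = 0 ∨ σ (i.1+1) ≤ j.1
    · rw [if_pos hc, if_pos (by omega)]
    · rw [if_neg hc, if_neg (by omega)]
  have hdetPF : (PF m σ).det = (Equiv.Perm.sign e : ℤ) * (PL m).det := by
    rw [hPF]
    exact_mod_cast Matrix.det_permute e (PL m)
  -- the product N and its first column
  set N := PD m * PF m σ with hN
  have hcol : ∀ i : Fin (m+1), N i 0 = if i.1 = 0 then 1 else 0 := by
    intro i
    rw [hN, PD_mul]
    by_cases hi : i.1 = 0
    · simp [PF, hi]
    · simp [PF, hi]
  have hdetN : N.det = (N.submatrix Fin.succ Fin.succ).det := by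
    rw [Matrix.det_succ_column_zero]
    rw [Finset.sum_eq_single (0 : Fin (m+1))]
    · rw [hcol]
      simp [Fin.succAbove_zero]
    · intro i _ hi
      have hi' : ¬(i : ℕ) = 0 := fun h => hi (Fin.ext (by simp [h]))
      rw [hcol, if_neg hi']
      ring
    · intro h
      exact absurd (Finset.mem_univ _) h
  set s : Fin (m+1-1) → ℝ := fun i => if σ (i.1+2) < σ (i.1+1) then 1 else -1 with hs
  have hsub : N.submatrix Fin.succ Fin.succ = Matrix.diagonal s * petrie (m+1) σ := by
    ext i j
    have hilt : i.1 < m := i.isLt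
    have hne : σ (i.1+2) ≠ σ (i.1+1) := by
      intro h
      have := hinj _ _ (by omega) (by omega) (by omega) (by omega) h
      omega
    have hb := hval (i.1+2) (by omega) (by omega)
    have ha := hval (i.1+1) (by omega) (by omega)
    rw [Matrix.diagonal_mul, Matrix.submatrix_apply, hN, PD_mul]
    simp only [Fin.val_succ, petrie, PF, Matrix.of_apply, hs, Fin.val_mk, Nat.add_one_ne_zero,
      false_or, if_false, Nat.add_sub_cancel, show i.1+1+1 = i.1+2 from rfl]
    rcases lt_or_gt_of_ne hne with hlt | hgt
    · rw [min_eq_right (le_of_lt hlt), max_eq_left (le_of_lt hlt)]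
      split_ifs <;> first | ring1 | (exfalso; omega)
    · rw [min_eq_left (le_of_lt hgt), max_eq_right (le_of_lt hgt)]
      split_ifs <;> first | ring1 | (exfalso; omega)
  have hdet2 : N.det = (∏ i, s i) * (petrie (m+1) σ).det := by
    rw [hdetN, hsub, Matrix.det_mul, Matrix.det_diagonal]
    rfl
  -- determinant of PD * PL
  have hW : (PD m * PL m).det = ∏ i : Fin (m+1), (if i.1 = 0 then (1:ℝ) else -1) := by
    have ht : (PD m * PL m).BlockTriangular id := by
      intro i j hij
      simp only [id_eq] at hij
      have h2 : (j : ℕ) < (i : ℕ) := hij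
      rw [PD_mul_PL, if_neg (by omega : ¬(i : ℕ) = 0), if_neg (ne_of_lt hij)]
    rw [Matrix.det_of_upperTriangular ht]
    refine Finset.prod_congr rfl fun i _ => ?_
    rw [PD_mul_PL]
    by_cases hi : i.1 = 0 <;> simp [hi]
  have hsign : ((Equiv.Perm.sign e : ℤ) : ℝ)^2 = 1 := by
    rcases Int.units_eq_one_or (Equiv.Perm.sign e) with h | h <;> rw [h] <;> norm_num
  have hprods : (∏ i, s i)^2 = 1 := by
    rw [← Finset.prod_pow]
    refine Finset.prod_eq_one fun i _ => ?_
    rw [hs]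
    by_cases h : σ (i.1+2) < σ (i.1+1) <;> simp [h]
  have hproddiag : (∏ i : Fin (m+1), (if i.1 = 0 then (1:ℝ) else -1))^2 = 1 := by
    rw [← Finset.prod_pow]
    refine Finset.prod_eq_one fun i _ => ?_
    by_cases h : i.1 = 0 <;> simp [h]
  calc (petrie (m+1) σ).det ^ 2
      = (∏ i, s i)^2 * (petrie (m+1) σ).det^2 := by rw [hprods, one_mul]
    _ = ((∏ i, s i) * (petrie (m+1) σ).det)^2 := by ring
    _ = N.det^2 := by rw [hdet2]
    _ = (PD m).det^2 * ((PF m σ).det)^2 := by rw [hN, Matrix.det_mul]; ring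
    _ = (PD m).det^2 * (((Equiv.Perm.sign e : ℤ) : ℝ)^2 * (PL m).det^2) := by
        rw [hdetPF]; ring
    _ = ((PD m).det * (PL m).det)^2 := by rw [hsign]; ring
    _ = (PD m * PL m).det^2 := by rw [Matrix.det_mul]
    _ = (∏ i : Fin (m+1), (if i.1 = 0 then (1:ℝ) else -1))^2 := by rw [hW]
    _ = 1 := hproddiag

/-- The determinant of the Petrie matrix of a permutation of `P_n` is `1` or `-1`;
in particular the Petrie matrix is invertible. -/
theorem petrie_det_eq_one_or_neg_one (n : ℕ) (hn : 3 ≤ n) (σ : ℕ → ℕ)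
    (hσ : IsPermOn n σ) :
    ((petrie n σ).det = 1 ∨ (petrie n σ).det = -1) ∧ IsUnit (petrie n σ) := by
  obtain ⟨m, rfl⟩ : ∃ m, n = m + 1 := ⟨n - 1, by omega⟩
  have hsq := petrie_det_sq m σ hσ
  rw [sq] at hsq
  have hd := mul_self_eq_one_iff.mp hsq
  refine ⟨hd, ?_⟩
  rw [Matrix.isUnit_iff_isUnit_det]
  rcases hd with h | h <;> rw [h]
  · exact isUnit_one
  · exact isUnit_one.neg
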